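/- Let q be an odd prime power with q ≡ 2 (mod 3), let a_1, …, a_{q-1} be an enumeration of F_q^×, and let T_q = [1/(a_i² - a_i a_j + a_j²)]_{1≤i,j≤q-1} be the (q-1)×(q-1) matrix over F_q. Then det T_q = (-1)^{(q+1)/2} · 2^{(q-2)/3}, an element of the prime subfield F_p ⊆ F_q, where p is the characteristic of F_q. -/

import Mathlib

theorem stmt15 (F : Type*) [Field F] [Fintype F] (q : ℕ)
    (hq : Fintype.card F = q) (hodd : Odd q) (h3 : q % 3 = 2)
    (a : Fin (q - 1) ≃ Fˣ) :
    Matrix.det (Matrix.of fun i j : Fin (q - 1) =>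
        ((a i : F) ^ 2 - (a i : F) * (a j : F) + (a j : F) ^ 2)⁻¹) =
      (-1 : F) ^ ((q + 1) / 2) * 2 ^ ((q - 2) / 3) := by
  classical
  have hq2 : q % 2 = 1 := Nat.odd_iff.mp hodd
  have hcard2 : 2 ≤ q := hq ▸ Fintype.one_lt_card
  have hq5 : 5 ≤ q := by omega
  have hq0 : ((q : ℕ) : F) = 0 := by rw [← hq]; exact FiniteField.cast_card_eq_zero F
  have h2F : (2 : F) ≠ 0 := by
    intro h
    have h1 : ((q : ℕ) : F) = 1 := by
      have hq' : q = 2 * (q / 2) + 1 := by omega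
      rw [hq']; push_cast; rw [h]; ring
    rw [hq0] at h1; exact one_ne_zero h1.symm
  have h3F : (3 : F) ≠ 0 := by
    intro h
    have h1 : ((q : ℕ) : F) = 2 := by
      have hq' : q = 3 * (q / 3) + 2 := by omega
      rw [hq']; push_cast; rw [h]; ring
    rw [hq0] at h1; exact h2F h1.symm
  -- the denominators are nonzero
  have hzne : ∀ z : Fˣ, ((z : F) ^ 2 - (z : F) + 1) ≠ 0 := by
    intro z h
    have h6 : (z : F) ^ 6 = 1 := by
      have h3' : (z : F) ^ 3 = -1 := by linear_combination ((z : F) + 1) * h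
      calc (z : F) ^ 6 = ((z : F) ^ 3) ^ 2 := by ring
        _ = 1 := by rw [h3']; ring
    have hq1 : (z : F) ^ (q - 1) = 1 := by
      rw [← hq]; exact FiniteField.pow_card_sub_one_eq_one _ (Units.ne_zero z)
    have hgcd : Nat.gcd 6 (q - 1) = 2 := by
      have hd6 : Nat.gcd 6 (q - 1) ∣ 6 := Nat.gcd_dvd_left _ _
      have hdq : Nat.gcd 6 (q - 1) ∣ q - 1 := Nat.gcd_dvd_right _ _
      have h2d : 2 ∣ Nat.gcd 6 (q - 1) := Nat.dvd_gcd ⟨3, rfl⟩ (by omega)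
      have hle : Nat.gcd 6 (q - 1) ≤ 6 := Nat.le_of_dvd (by norm_num) hd6
      interval_cases h : Nat.gcd 6 (q - 1) <;> omega
    have h2' : (z : F) ^ 2 = 1 := by
      rw [← hgcd]; exact pow_gcd_eq_one.mpr ⟨h6, hq1⟩
    have : ((z : F) - 1) * ((z : F) + 1) = 0 := by linear_combination h2'
    rcases mul_eq_zero.mp this with h1 | h1
    · have hz1 : (z : F) = 1 := by linear_combination h1
      rw [hz1] at h; norm_num at h
    · have hz1 : (z : F) = -1 := by linear_combination h1
      apply h3F; rw [hz1] at h; linear_combination h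
  -- the character sums S k
  set S : ℕ → F := fun k => ∑ z : Fˣ, ((z : F) ^ 2 - (z : F) + 1)⁻¹ * (z : F) ^ k with hS
  have hrecE : ∀ k : ℕ, S (k + 2) - S (k + 1) + S k = if (q - 1) ∣ k then (-1 : F) else 0 := by
    intro k
    have hsum : S (k + 2) - S (k + 1) + S k = ∑ z : Fˣ, (z : F) ^ k := by
      rw [hS]; simp only
      rw [← Finset.sum_sub_distrib, ← Finset.sum_add_distrib]
      apply Finset.sum_congr rfl
      intro z _
      have hinv : ((z : F) ^ 2 - (z : F) + 1)⁻¹ * ((z : F) ^ 2 - (z : F) + 1) = 1 :=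
        inv_mul_cancel₀ (hzne z)
      linear_combination ((z : F) ^ k) * hinv
    rw [hsum]
    have h := FiniteField.sum_pow_units F k
    rw [hq] at h
    simpa [Units.val_pow_eq_pow_val] using h
  have hrec' : ∀ k, 1 ≤ k → k < q - 1 → S (k + 2) = S (k + 1) - S k := by
    intro k h1 h2
    have h := hrecE k
    rw [if_neg (fun hd => by have := Nat.le_of_dvd (by omega) hd; omega)] at h
    linear_combination h
  have hshift : ∀ k, 1 ≤ k → k + 1 < q - 1 → S (k + 3) = -S k := by
    intro k h1 h2
    have e1 := hrec' k h1 (by omega)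
    have e2 := hrec' (k + 1) (by omega) h2
    rw [show k + 1 + 2 = k + 3 by ring, show k + 1 + 1 = k + 2 by ring] at e2
    rw [e2, e1]; ring
  have hper : ∀ k, 1 ≤ k → k + 4 < q - 1 → S (k + 6) = S k := by
    intro k h1 h2
    have e1 := hshift k h1 (by omega)
    have e2 := hshift (k + 3) (by omega) (by omega)
    rw [show k + 3 + 3 = k + 6 by ring] at e2
    rw [e2, e1]; ring
  have hSq : S (q - 1) = S 0 := by
    rw [hS]; simp only
    apply Finset.sum_congr rfl
    intro z _
    have h1 : (z : F) ^ (q - 1) = 1 := by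
      rw [← hq]; exact FiniteField.pow_card_sub_one_eq_one _ (Units.ne_zero z)
    rw [h1, pow_zero]
  have hS02 : S 0 = S 2 := by
    rw [hS]; simp only
    rw [← Equiv.sum_comp (Equiv.inv Fˣ)
      (fun z : Fˣ => ((z : F) ^ 2 - (z : F) + 1)⁻¹ * (z : F) ^ 0)]
    apply Finset.sum_congr rfl
    intro z _
    simp only [Equiv.inv_apply, Units.val_inv_eq_inv_val, pow_zero, mul_one]
    have hz0 : (z : F) ≠ 0 := Units.ne_zero z
    have key : ((z : F)⁻¹) ^ 2 - (z : F)⁻¹ + 1 = ((z : F) ^ 2)⁻¹ * ((z : F) ^ 2 - (z : F) + 1) := by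
      field_simp
      ring
    rw [key, mul_inv, inv_inv]
    ring
  have h0 : S 2 = S 1 - S 0 - 1 := by
    have h := hrecE 0
    rw [if_pos (dvd_zero _)] at h
    norm_num at h
    linear_combination h
  have hS1 : S 1 = 2 * S 0 + 1 := by linear_combination (-1 : F) * hS02 - h0
  have h3v : S 3 = S 2 - S 1 := by
    have h := hrec' 1 le_rfl (by omega); norm_num at h; exact h
  have h4v : S 4 = S 3 - S 2 := by
    have h := hrec' 2 (by omega) (by omega); norm_num at h; exact h
  obtain ⟨m, hm⟩ : ∃ m, q - 1 = 4 + 6 * m := ⟨(q - 5) / 6, by omega⟩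
  have hchain : ∀ t, 4 + 6 * t ≤ q - 1 → S (4 + 6 * t) = S 4 := by
    intro t
    induction t with
    | zero => intro _; norm_num
    | succ t ih =>
      intro ht
      have h1 : S (4 + 6 * t + 6) = S (4 + 6 * t) := hper (4 + 6 * t) (by omega) (by omega)
      rw [show 4 + 6 * (t + 1) = 4 + 6 * t + 6 by ring, h1]
      exact ih (by omega)
  have hSq4 : S 0 = S 4 := by
    rw [← hSq, hm]
    exact hchain m (by omega)
  have hi3 : (3 : F)⁻¹ * 3 = 1 := inv_mul_cancel₀ h3F
  have hS0 : S 0 = -(3 : F)⁻¹ := by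
    have h : (3 : F) * S 0 = -1 := by linear_combination hSq4 + h4v + h3v - hS1
    linear_combination (3 : F)⁻¹ * h - S 0 * hi3
  have hS1v : S 1 = (3 : F)⁻¹ := by linear_combination hS1 + 2 * hS0 - hi3
  have hv2 : S 2 = -(3 : F)⁻¹ := by rw [← hS02]; exact hS0
  have hv3 : S 3 = -(2 * (3 : F)⁻¹) := by rw [h3v, hv2, hS1v]; ring
  have hv4 : S 4 = -(3 : F)⁻¹ := by rw [h4v, hv3, hv2]; ring
  -- the periodic pattern of values
  set c : ℕ → F := fun r =>
    if r = 0 then 2 * (3 : F)⁻¹ else if r = 1 then (3 : F)⁻¹ else if r = 2 then -(3 : F)⁻¹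
      else if r = 3 then -(2 * (3 : F)⁻¹) else if r = 4 then -(3 : F)⁻¹ else (3 : F)⁻¹ with hc
  have hpat : ∀ k, 1 ≤ k → k ≤ q - 2 → S k = c (k % 6) := by
    intro k
    induction k using Nat.strong_induction_on with
    | _ k ih =>
      intro h1 h2
      rcases Nat.lt_or_ge k 7 with hk | hk
      · interval_cases k
        · rw [hS1v]; norm_num [hc]
        · rw [hv2]; norm_num [hc]
        · rw [hv3]; norm_num [hc]
        · rw [hv4]; norm_num [hc]
        · have h5 : S 5 = S 4 - S 3 := by
            have h := hrec' 3 (by omega) (by omega); norm_num at h; exact h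
          rw [h5, hv4, hv3]; norm_num [hc]; ring
        · have h6 : S 6 = S 5 - S 4 := by
            have h := hrec' 4 (by omega) (by omega); norm_num at h; exact h
          have h5 : S 5 = S 4 - S 3 := by
            have h := hrec' 3 (by omega) (by omega); norm_num at h; exact h
          rw [h6, h5, hv4, hv3]; norm_num [hc]
      · have hper' : S k = S (k - 6) := by
          have h := hper (k - 6) (by omega) (by omega)
          rw [show k - 6 + 6 = k by omega] at h
          exact h
        rw [hper', ih (k - 6) (by omega) (by omega) (by omega),
          show (k - 6) % 6 = k % 6 by omega]
  -- the product of the S values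
  have hprodlem : ∀ t, 4 + 6 * t ≤ q - 1 →
      ∏ k ∈ Finset.range (4 + 6 * t), S k =
        (-1 : F) ^ (t + 1) * 2 ^ (2 * t + 1) * ((3 : F)⁻¹) ^ (4 + 6 * t) := by
    intro t
    induction t with
    | zero =>
      intro _
      have h4 : ∏ k ∈ Finset.range (4 + 6 * 0), S k = S 0 * S 1 * S 2 * S 3 := by
        rw [show 4 + 6 * 0 = 3 + 1 by norm_num, Finset.prod_range_succ,
          show (3 : ℕ) = 2 + 1 from rfl, Finset.prod_range_succ,
          show (2 : ℕ) = 1 + 1 from rfl, Finset.prod_range_succ, Finset.prod_range_one]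
      rw [h4, hS0, hS1v, hv2, hv3]
      ring
    | succ t ih =>
      intro ht
      have hstep : ∏ k ∈ Finset.range (4 + 6 * (t + 1)), S k =
          (∏ k ∈ Finset.range (4 + 6 * t), S k) * ∏ r ∈ Finset.range 6, S (4 + 6 * t + r) := by
        rw [show 4 + 6 * (t + 1) = (4 + 6 * t) + 6 by ring, Finset.prod_range_add]
      have h6 : ∏ r ∈ Finset.range 6, S (4 + 6 * t + r) = (-1) * 2 ^ 2 * ((3 : F)⁻¹) ^ 6 := by
        rw [show (6 : ℕ) = 5 + 1 from rfl, Finset.prod_range_succ,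
          show (5 : ℕ) = 4 + 1 from rfl, Finset.prod_range_succ,
          show (4 : ℕ) = 3 + 1 from rfl, Finset.prod_range_succ,
          show (3 : ℕ) = 2 + 1 from rfl, Finset.prod_range_succ,
          Finset.prod_range_succ, Finset.prod_range_one]
        rw [hpat (4 + 6 * t + 0) (by omega) (by omega),
          hpat (4 + 6 * t + 1) (by omega) (by omega),
          hpat (4 + 6 * t + 2) (by omega) (by omega),
          hpat (4 + 6 * t + 3) (by omega) (by omega),
          hpat (4 + 6 * t + 4) (by omega) (by omega),
          hpat (4 + 6 * t + 5) (by omega) (by omega),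
          show (4 + 6 * t + 0) % 6 = 4 by omega, show (4 + 6 * t + 1) % 6 = 5 by omega,
          show (4 + 6 * t + 2) % 6 = 0 by omega, show (4 + 6 * t + 3) % 6 = 1 by omega,
          show (4 + 6 * t + 4) % 6 = 2 by omega, show (4 + 6 * t + 5) % 6 = 3 by omega]
        norm_num [hc]
        rw [show (729 : F) = 3 ^ 6 by norm_num, ← inv_pow]
        ring
      rw [hstep, ih (by omega), h6, show 4 + 6 * (t + 1) = (4 + 6 * t) + 6 by ring, pow_add]
      ring
  -- the column identity
  have hcol : ∀ (u : Fˣ) (k : ℕ),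
      ∑ j : Fin (q - 1), ((u : F) ^ 2 - (u : F) * (a j : F) + (a j : F) ^ 2)⁻¹ * (a j : F) ^ k =
        (u : F) ^ k * ((u : F) ^ 2)⁻¹ * S k := by
    intro u k
    have step1 : ∑ j : Fin (q - 1),
          ((u : F) ^ 2 - (u : F) * (a j : F) + (a j : F) ^ 2)⁻¹ * (a j : F) ^ k =
        ∑ v : Fˣ, ((u : F) ^ 2 - (u : F) * (v : F) + (v : F) ^ 2)⁻¹ * (v : F) ^ k :=
      Fintype.sum_equiv a _ _ (fun j => rfl)
    have step2 : ∑ v : Fˣ, ((u : F) ^ 2 - (u : F) * (v : F) + (v : F) ^ 2)⁻¹ * (v : F) ^ k =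
        ∑ z : Fˣ, ((u : F) ^ 2 - (u : F) * ((u * z : Fˣ) : F) + ((u * z : Fˣ) : F) ^ 2)⁻¹ *
          ((u * z : Fˣ) : F) ^ k :=
      (Fintype.sum_equiv (Equiv.mulLeft u)
        (fun z : Fˣ => ((u : F) ^ 2 - (u : F) * ((u * z : Fˣ) : F) + ((u * z : Fˣ) : F) ^ 2)⁻¹ *
          ((u * z : Fˣ) : F) ^ k)
        (fun v : Fˣ => ((u : F) ^ 2 - (u : F) * (v : F) + (v : F) ^ 2)⁻¹ * (v : F) ^ k)
        (fun z => rfl)).symm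
    rw [step1, step2]
    have step3 : ∀ z : Fˣ,
        ((u : F) ^ 2 - (u : F) * ((u * z : Fˣ) : F) + ((u * z : Fˣ) : F) ^ 2)⁻¹ *
            ((u * z : Fˣ) : F) ^ k =
          (u : F) ^ k * ((u : F) ^ 2)⁻¹ * (((z : F) ^ 2 - (z : F) + 1)⁻¹ * (z : F) ^ k) := by
      intro z
      simp only [Units.val_mul]
      rw [show (u : F) ^ 2 - (u : F) * ((u : F) * (z : F)) + ((u : F) * (z : F)) ^ 2 =
        (u : F) ^ 2 * ((z : F) ^ 2 - (z : F) + 1) by ring, mul_inv, mul_pow]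
      ring
    rw [Finset.sum_congr rfl (fun z _ => step3 z), ← Finset.mul_sum, hS]
  -- the matrix identity and determinant
  have hvinj : Function.Injective (fun i : Fin (q - 1) => (a i : F)) := by
    intro i j h
    exact a.injective (Units.ext h)
  have hvne : (Matrix.vandermonde fun i : Fin (q - 1) => (a i : F)).det ≠ 0 := by
    rw [Matrix.det_vandermonde_ne_zero_iff]
    exact hvinj
  have hmatrix : (Matrix.of fun i j : Fin (q - 1) =>
        ((a i : F) ^ 2 - (a i : F) * (a j : F) + (a j : F) ^ 2)⁻¹) *
        (Matrix.vandermonde fun i : Fin (q - 1) => (a i : F)) =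
      Matrix.diagonal (fun i : Fin (q - 1) => ((a i : F) ^ 2)⁻¹) *
        (Matrix.vandermonde fun i : Fin (q - 1) => (a i : F)) *
        Matrix.diagonal (fun k : Fin (q - 1) => S (k : ℕ)) := by
    ext i k
    rw [Matrix.mul_apply]
    simp only [Matrix.of_apply, Matrix.vandermonde_apply]
    rw [hcol (a i) (k : ℕ)]
    rw [Matrix.mul_diagonal, Matrix.diagonal_mul]
    simp only [Matrix.vandermonde_apply]
    ring
  have hdet : (Matrix.of fun i j : Fin (q - 1) =>
        ((a i : F) ^ 2 - (a i : F) * (a j : F) + (a j : F) ^ 2)⁻¹).det =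
      (∏ i : Fin (q - 1), ((a i : F) ^ 2)⁻¹) * ∏ k : Fin (q - 1), S (k : ℕ) := by
    apply mul_right_cancel₀ hvne
    calc (Matrix.of fun i j : Fin (q - 1) =>
          ((a i : F) ^ 2 - (a i : F) * (a j : F) + (a j : F) ^ 2)⁻¹).det *
          (Matrix.vandermonde fun i : Fin (q - 1) => (a i : F)).det
        = ((Matrix.of fun i j : Fin (q - 1) =>
            ((a i : F) ^ 2 - (a i : F) * (a j : F) + (a j : F) ^ 2)⁻¹) *
            (Matrix.vandermonde fun i : Fin (q - 1) => (a i : F))).det := (Matrix.det_mul _ _).symm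
      _ = (Matrix.diagonal (fun i : Fin (q - 1) => ((a i : F) ^ 2)⁻¹) *
            (Matrix.vandermonde fun i : Fin (q - 1) => (a i : F)) *
            Matrix.diagonal (fun k : Fin (q - 1) => S (k : ℕ))).det := by rw [hmatrix]
      _ = (∏ i : Fin (q - 1), ((a i : F) ^ 2)⁻¹) *
            (Matrix.vandermonde fun i : Fin (q - 1) => (a i : F)).det *
            ∏ k : Fin (q - 1), S (k : ℕ) := by
          rw [Matrix.det_mul, Matrix.det_mul, Matrix.det_diagonal, Matrix.det_diagonal]
      _ = (∏ i : Fin (q - 1), ((a i : F) ^ 2)⁻¹) * (∏ k : Fin (q - 1), S (k : ℕ)) *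
            (Matrix.vandermonde fun i : Fin (q - 1) => (a i : F)).det := by ring
  -- the product of the diagonal inverses is 1
  have hprodx : ∏ i : Fin (q - 1), ((a i : F) ^ 2)⁻¹ = 1 := by
    have e1 : ∏ i : Fin (q - 1), ((a i : F) ^ 2)⁻¹ = ∏ u : Fˣ, ((u : F) ^ 2)⁻¹ :=
      Fintype.prod_equiv a _ _ (fun i => rfl)
    rw [e1, Finset.prod_inv_distrib, Finset.prod_pow]
    have e2 : ∏ u : Fˣ, (u : F) = ((∏ u : Fˣ, u : Fˣ) : F) := by
      rw [← Units.coeHom_apply, map_prod]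
      rfl
    rw [e2, FiniteField.prod_univ_units_id_eq_neg_one]
    norm_num
  rw [hdet, hprodx, one_mul]
  rw [← Finset.prod_range (fun k => S k), hm, hprodlem m (by omega)]
  have h3pow : ((3 : F)⁻¹) ^ (4 + 6 * m) = 1 := by
    rw [← hm, ← hq, inv_pow, FiniteField.pow_card_sub_one_eq_one _ h3F, inv_one]
  rw [h3pow, mul_one]
  have e1 : (q + 1) / 2 = 3 * m + 3 := by omega
  have e2 : (q - 2) / 3 = 2 * m + 1 := by omega
  rw [e1, e2]
  have hpow : (-1 : F) ^ (3 * m + 3) = (-1 : F) ^ (m + 1) := by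
    rw [show 3 * m + 3 = (m + 1) + 2 * (m + 1) by ring, pow_add, pow_mul, neg_one_sq, one_pow,
      mul_one]
  rw [hpow]
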